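/- arXiv:1612.06475 — 2 statements merged into one kernel-verified Lean document; each statement's English description precedes it below -/
import Mathlib

section
/- For every valid configuration c = (z, σ, t), the set of reachable gold brackets is disjoint from the brackets already built: reach(c) ∩ t = ∅, and consequently reach(c) ⊆ t_G \ t. -/
/-!
Formalization of the span-based Structure/Label transition parsing system of
Cross & Huang (2016), "Span-Based Constituency Parsing with a Structure-Label
System and Provably Optimal Dynamic Oracles".

A configuration is `(z, σ, t)` where `z` is the step number, `σ` the stack of
span boundaries and `t` the set of brackets built so far.  A bracket is a
triple `(X, i, j)` with `X` a nonterminal label and `i < j ≤ n` a span.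
-/

namespace SpanParser

structure Config (N : Type*) where
  z : ℕ
  σ : List ℕ
  t : Finset (N × ℕ × ℕ)

variable {N : Type*}

/-- The span of a bracket. -/
def span (b : N × ℕ × ℕ) : ℕ × ℕ := b.2

/-- Top (rightmost) boundary of the stack. -/
def topJ (σ : List ℕ) : ℕ := σ.getLastD 0

/-- Second-to-top boundary of the stack. -/
def topI (σ : List ℕ) : ℕ := σ.dropLast.getLastD 0

/-- Parser actions: shift, combine, label-`X`, and nolabel. -/
inductive Action (N : Type*) where
  | sh : Action N
  | comb : Action N
  | label : N → Action N
  | nolabel : Action N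

variable [DecidableEq N]

/-- Applicability of an action at a configuration (for sentence length `n`). -/
def App (n : ℕ) (c : Config N) : Action N → Prop
  | .sh      => Even c.z ∧ c.σ ≠ [] ∧ topJ c.σ < n
  | .comb    => Even c.z ∧ 3 ≤ c.σ.length
  | .label _ => Odd c.z ∧ 2 ≤ c.σ.length
  | .nolabel => Odd c.z ∧ 2 ≤ c.σ.length ∧ c.z < 4 * n - 1

/-- The result `τ(c)` of applying action `τ` to configuration `c`. -/
def doAct (c : Config N) : Action N → Config N
  | .sh      => ⟨c.z + 1, c.σ ++ [topJ c.σ + 1], c.t⟩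
  | .comb    => ⟨c.z + 1, c.σ.dropLast.dropLast ++ [topJ c.σ], c.t⟩
  | .label X => ⟨c.z + 1, c.σ, insert (X, topI c.σ, topJ c.σ) c.t⟩
  | .nolabel => ⟨c.z + 1, c.σ, c.t⟩

/-- The initial configuration `(0, [0], ∅)`. -/
def initial (N : Type*) : Config N := ⟨0, [0], ∅⟩

/-- One transition step `c ⊢ c'`. -/
def Step (n : ℕ) (c c' : Config N) : Prop := ∃ a, App n c a ∧ c' = doAct c a

/-- `⊢*`: reflexive-transitive closure of the transition relation. -/
def Reaches (n : ℕ) : Config N → Config N → Prop := Relation.ReflTransGen (Step n)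

/-- A configuration is valid if it is reachable from the initial configuration. -/
def Valid (n : ℕ) (c : Config N) : Prop := Reaches n (initial N) c

/-- A final configuration: `σ = [0, n]` and `z = 4n - 2`. -/
def Final (n : ℕ) (c : Config N) : Prop := c.σ = [0, n] ∧ c.z = 4 * n - 2

/-- `D(c)`: the set of trees of final configurations reachable from `c`. -/
def Dset (n : ℕ) (c : Config N) : Set (Finset (N × ℕ × ℕ)) :=
  {t' | ∃ c', Reaches n c c' ∧ Final n c' ∧ c'.t = t'}

/-- `(i,j) ⪯ (p,q)`: span `(i,j)` is encompassed by `(p,q)`, i.e. `p ≤ i < j ≤ q`. -/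
def Enc (s₁ s₂ : ℕ × ℕ) : Prop := s₂.1 ≤ s₁.1 ∧ s₁.1 < s₁.2 ∧ s₁.2 ≤ s₂.2

/-- `(i,j) ≺ (p,q)`: strict encompassment. -/
def SEnc (s₁ s₂ : ℕ × ℕ) : Prop := Enc s₁ s₂ ∧ s₁ ≠ s₂

/-- `tG` is a gold tree for sentence length `n`: valid spans, pairwise-distinct
spans, pairwise non-crossing spans, and exactly one bracket with span `(0, n)`
(uniqueness follows from distinctness of spans). -/
structure IsGold (n : ℕ) (tG : Finset (N × ℕ × ℕ)) : Prop where
  validSpans : ∀ b ∈ tG, (span b).1 < (span b).2 ∧ (span b).2 ≤ n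
  distinctSpans : ∀ b₁ ∈ tG, ∀ b₂ ∈ tG, span b₁ = span b₂ → b₁ = b₂
  noncrossing : ∀ b₁ ∈ tG, ∀ b₂ ∈ tG,
    Enc (span b₁) (span b₂) ∨ Enc (span b₂) (span b₁) ∨
    (span b₁).2 ≤ (span b₂).1 ∨ (span b₂).2 ≤ (span b₁).1
  root : ∃ X, (X, 0, n) ∈ tG

open Classical in
/-- `left(c)`: gold brackets (strictly, at even steps) encompassing the top
span whose left boundary occurs on the stack. -/
noncomputable def leftSet (tG : Finset (N × ℕ × ℕ)) (c : Config N) :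
    Finset (N × ℕ × ℕ) :=
  tG.filter fun b =>
    (if Even c.z then SEnc (topI c.σ, topJ c.σ) (span b)
     else Enc (topI c.σ, topJ c.σ) (span b)) ∧ (span b).1 ∈ c.σ

open Classical in
/-- `right(c)`: gold brackets entirely on the queue. -/
noncomputable def rightSet (tG : Finset (N × ℕ × ℕ)) (c : Config N) :
    Finset (N × ℕ × ℕ) :=
  tG.filter fun b => topJ c.σ ≤ (span b).1

open Classical in
/-- `reach(c)`: the reachable gold brackets (all of `t_G` at the initial
configuration, whose stack has fewer than two boundaries). -/
noncomputable def reach (tG : Finset (N × ℕ × ℕ)) (c : Config N) :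
    Finset (N × ℕ × ℕ) :=
  if c.σ.length < 2 then tG else leftSet tG c ∪ rightSet tG c

/-- The optimal tree `t*(c) = t ∪ reach(c)`. -/
noncomputable def tstar (tG : Finset (N × ℕ × ℕ)) (c : Config N) :
    Finset (N × ℕ × ℕ) :=
  c.t ∪ reach tG c

/-- `b = next(c)`: the `≺`-minimal element of `left(c)`. -/
def IsNext (tG : Finset (N × ℕ × ℕ)) (c : Config N) (b : N × ℕ × ℕ) : Prop :=
  b ∈ leftSet tG c ∧ ∀ b' ∈ leftSet tG c, Enc (span b) (span b')

/-- The dynamic-oracle policy `dyna(c)` as a predicate on actions. -/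
def Dyna (tG : Finset (N × ℕ × ℕ)) (c : Config N) (a : Action N) : Prop :=
  if c.σ.length < 2 then a = Action.sh
  else if Even c.z then
    ∃ b, IsNext tG c b ∧
      (((span b).1 = topI c.σ ∧ topJ c.σ < (span b).2 ∧ a = Action.sh) ∨
       ((span b).1 < topI c.σ ∧ (span b).2 = topJ c.σ ∧ a = Action.comb) ∨
       ((span b).1 < topI c.σ ∧ topJ c.σ < (span b).2 ∧
          (a = Action.sh ∨ a = Action.comb)))
  else
    (∃ X, (X, topI c.σ, topJ c.σ) ∈ tG ∧ a = Action.label X) ∨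
    ((∀ X, (X, topI c.σ, topJ c.σ) ∉ tG) ∧ a = Action.nolabel)

/-- `F1` of a predicted bracket set `t'` against the gold tree `tG`
(`0` when `t' ∩ tG = ∅`). -/
noncomputable def f1 (tG t' : Finset (N × ℕ × ℕ)) : ℝ :=
  if t' ∩ tG = ∅ then 0
  else
    (2 * (((t' ∩ tG).card : ℝ) / (tG.card : ℝ)) * (((t' ∩ tG).card : ℝ) / (t'.card : ℝ))) /
      ((((t' ∩ tG).card : ℝ) / (tG.card : ℝ)) + (((t' ∩ tG).card : ℝ) / (t'.card : ℝ)))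

/-- `F1(c)`: the best `F1` among trees reachable from `c`. -/
noncomputable def configF1 (n : ℕ) (tG : Finset (N × ℕ × ℕ)) (c : Config N) : ℝ :=
  sSup (f1 tG '' Dset n c)

/-- A run of (applicable) actions from one configuration to another. -/
inductive Run (n : ℕ) : Config N → List (Action N) → Config N → Prop
  | refl (c : Config N) : Run n c [] c
  | step {c c' : Config N} {as : List (Action N)} (a : Action N)
      (happ : App n c a) (h : Run n (doAct c a) as c') : Run n c (a :: as) c'

/-- A run all of whose actions follow the dynamic oracle. -/
inductive DynaRun (n : ℕ) (tG : Finset (N × ℕ × ℕ)) : Config N → Config N → Prop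
  | refl (c : Config N) : DynaRun n tG c c
  | step {c c' : Config N} (a : Action N) (happ : App n c a) (hdyna : Dyna tG c a)
      (h : DynaRun n tG (doAct c a) c') : DynaRun n tG c c'

def isSh : Action N → Bool
  | .sh => true
  | _ => false

def isComb : Action N → Bool
  | .comb => true
  | _ => false

/-- Label-step actions: `label-X` or `nolabel`. -/
def isLabelStep : Action N → Bool
  | .label _ => true
  | .nolabel => true
  | _ => false



lemma head?_append_left {α : Type*} (l l' : List α) (h : l ≠ []) :
    (l ++ l').head? = l.head? := by
  cases l with
  | nil => exact absurd rfl h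
  | cons a m => simp

/-- Every element of a strictly increasing list is at most the last element. -/
lemma le_topJ {σ : List ℕ} (h : σ.Chain' (· < ·)) {x : ℕ} (hx : x ∈ σ) :
    x ≤ topJ σ := by
  have hne : σ ≠ [] := by rintro rfl; simp at hx
  have hσ : σ.dropLast ++ [σ.getLast hne] = σ := List.dropLast_append_getLast hne
  have hp : σ.Pairwise (· < ·) := List.isChain_iff_pairwise.mp h
  have htop : topJ σ = σ.getLast hne := by
    conv_lhs => rw [← hσ]
    simp [topJ]
  rw [htop]
  rw [← hσ] at hx hp
  rcases List.mem_append.mp hx with h1 | h1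
  · have := (List.pairwise_append.mp hp).2.2 x h1 (σ.getLast hne) (by simp)
    omega
  · simp at h1; omega

/-- Decomposition of a stack with at least two elements. -/
lemma stack_decomp {σ : List ℕ} (h : 2 ≤ σ.length) :
    σ = σ.dropLast.dropLast ++ [topI σ, topJ σ] := by
  have hne : σ ≠ [] := by rintro rfl; simp at h
  have hne2 : σ.dropLast ≠ [] := by
    have := σ.length_dropLast
    intro e
    rw [e] at this; simp at this; omega
  have hσ : σ.dropLast ++ [σ.getLast hne] = σ := List.dropLast_append_getLast hne
  have hσ2 : σ.dropLast.dropLast ++ [σ.dropLast.getLast hne2] = σ.dropLast :=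
    List.dropLast_append_getLast hne2
  have htop : topJ σ = σ.getLast hne := by
    conv_lhs => rw [← hσ]; simp [topJ]
  have htopI : topI σ = σ.dropLast.getLast hne2 := by
    unfold topI
    conv_lhs => rw [← hσ2]
    simp
  rw [htop, htopI]
  conv_lhs => rw [← hσ, ← hσ2]
  simp

/-- The key invariant maintained along any run. -/
def Inv (c : Config N) : Prop :=
  c.σ ≠ [] ∧ c.σ.head? = some 0 ∧ c.σ.Chain' (· < ·) ∧
  ∀ b ∈ c.t, (span b).1 < (span b).2 ∧ (span b).2 ≤ topJ c.σ ∧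
    ((span b).2 = topJ c.σ →
      topI c.σ ≤ (span b).1 ∧ (Odd c.z → topI c.σ < (span b).1))

lemma inv_step {n : ℕ} {c c' : Config N} (hinv : Inv c) (hs : Step n c c') :
    Inv c' := by
  obtain ⟨hne, hhd, hch, ht⟩ := hinv
  obtain ⟨a, happ, rfl⟩ := hs
  cases a with
  | sh =>
    obtain ⟨hev, -, hjn⟩ := happ
    refine ⟨by simp [doAct], ?_, ?_, ?_⟩
    · simp only [doAct]
      rw [head?_append_left _ _ hne]
      exact hhd
    · simp only [doAct]
      rw [List.Chain', List.isChain_iff_pairwise, List.pairwise_append]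
      refine ⟨List.isChain_iff_pairwise.mp hch, by simp, ?_⟩
      intro x hx y hy
      simp at hy; subst hy
      have := le_topJ hch hx
      omega
    · intro b hb
      simp only [doAct] at hb ⊢
      obtain ⟨h1, h2, h3⟩ := ht b hb
      have htJ : topJ (c.σ ++ [topJ c.σ + 1]) = topJ c.σ + 1 := by
        simp [topJ]
      rw [htJ]
      exact ⟨h1, by omega, by omega⟩
  | comb =>
    obtain ⟨hev, hlen⟩ := happ
    have hlen2 : 2 ≤ c.σ.length := by omega
    have hdec := stack_decomp hlen2
    have hne2 : c.σ.dropLast.dropLast ≠ [] := by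
      intro e
      rw [hdec, e] at hlen; simp at hlen
    set l := c.σ.dropLast.dropLast with hl
    set i := l.getLast hne2 with hi
    have hσ3 : l = l.dropLast ++ [i] := (List.dropLast_append_getLast hne2).symm
    have htJ' : topJ (l ++ [topJ c.σ]) = topJ c.σ := by simp [topJ]
    have htI' : topI (l ++ [topJ c.σ]) = i := by
      unfold topI
      rw [List.dropLast_concat]
      conv_lhs => rw [hσ3]
      simp [hi]
    have hp : c.σ.Pairwise (· < ·) := List.isChain_iff_pairwise.mp hch
    have hiI : i < topI c.σ := by
      have hp2 := hp
      rw [hdec] at hp2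
      exact (List.pairwise_append.mp hp2).2.2 i (List.getLast_mem hne2)
        (topI c.σ) (by simp)
    refine ⟨by simp [doAct], ?_, ?_, ?_⟩
    · show (l ++ [topJ c.σ]).head? = some 0
      rw [head?_append_left _ _ hne2]
      rw [hdec, head?_append_left _ _ hne2] at hhd
      exact hhd
    · show (l ++ [topJ c.σ]).Chain' (· < ·)
      rw [List.Chain', List.isChain_iff_pairwise] at hch ⊢
      refine hch.sublist ?_
      conv_rhs => rw [hdec]
      exact List.Sublist.append_left (List.sublist_cons_self _ _) l
    · intro b hb
      simp only [doAct] at hb ⊢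
      obtain ⟨h1, h2, h3⟩ := ht b hb
      rw [htJ', htI']
      refine ⟨h1, h2, ?_⟩
      intro hq
      have := (h3 hq).1
      exact ⟨by omega, fun _ => by omega⟩
  | label X =>
    obtain ⟨hodd, hlen⟩ := happ
    have hdec := stack_decomp hlen
    have hIJ : topI c.σ < topJ c.σ := by
      have hp := List.isChain_iff_pairwise.mp hch
      rw [hdec] at hp
      have := (List.pairwise_append.mp hp).2.1
      simpa using this
    have hnodd : ¬ Odd (c.z + 1) := by
      simp [Nat.odd_add_one, Nat.not_even_iff_odd, hodd]
    refine ⟨hne, hhd, hch, ?_⟩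
    intro b hb
    simp only [doAct] at hb ⊢
    rcases Finset.mem_insert.mp hb with rfl | hb'
    · exact ⟨hIJ, le_refl _, fun _ => ⟨le_refl _, fun h => absurd h hnodd⟩⟩
    · obtain ⟨h1, h2, h3⟩ := ht b hb'
      exact ⟨h1, h2, fun hq => ⟨(h3 hq).1, fun h => absurd h hnodd⟩⟩
  | nolabel =>
    obtain ⟨hodd, hlen, -⟩ := happ
    have hnodd : ¬ Odd (c.z + 1) := by
      simp [Nat.odd_add_one, Nat.not_even_iff_odd, hodd]
    refine ⟨hne, hhd, hch, ?_⟩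
    intro b hb
    simp only [doAct] at hb ⊢
    obtain ⟨h1, h2, h3⟩ := ht b hb
    exact ⟨h1, h2, fun hq => ⟨(h3 hq).1, fun h => absurd h hnodd⟩⟩

lemma inv_of_valid {n : ℕ} {c : Config N} (hc : Valid n c) : Inv c := by
  induction hc with
  | refl =>
    refine ⟨by simp [initial], by simp [initial], by simp [initial, List.Chain'], ?_⟩
    intro b hb; simp [initial] at hb
  | tail _ hstep ih => exact inv_step ih hstep

/-- For every valid configuration `c = (z, σ, t)`, the reachable gold
brackets are disjoint from the brackets already built: `reach(c) ∩ t = ∅`,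
and consequently `reach(c) ⊆ t_G \\ t`. -/
theorem reach_disjoint (n : ℕ) (hn : 1 ≤ n) (tG : Finset (N × ℕ × ℕ))
    (hG : IsGold n tG) (c : Config N) (hc : Valid n c) :
    reach tG c ∩ c.t = ∅ ∧ reach tG c ⊆ tG \ c.t := by
  have hinv := inv_of_valid hc
  obtain ⟨hne, hhd, hch, ht⟩ := hinv
  have hdisj : reach tG c ∩ c.t = ∅ := by
    unfold reach
    split_ifs with hlen
    · -- stack has fewer than 2 elements: σ = [0], so t = ∅
      have hσ : c.σ = [0] := by
        cases h : c.σ with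
        | nil => exact absurd h hne
        | cons a l =>
          rw [h] at hhd hlen
          simp at hhd
          subst hhd
          cases l with
          | nil => rfl
          | cons b m => exact absurd hlen (by simp)
      have htJ : topJ c.σ = 0 := by rw [hσ]; rfl
      have : c.t = ∅ := by
        ext b
        simp only [Finset.notMem_empty, iff_false]
        intro hb
        obtain ⟨h1, h2, -⟩ := ht b hb
        omega
      rw [this]; simp
    · push_neg at hlen
      ext b
      simp only [Finset.mem_inter, Finset.mem_union, Finset.notMem_empty, iff_false]
      rintro ⟨hbl | hbr, hbt⟩
      · obtain ⟨h1, h2, h3⟩ := ht b hbt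
        simp only [leftSet, Finset.mem_filter] at hbl
        obtain ⟨-, henc, -⟩ := hbl
        split_ifs at henc with hev
        · obtain ⟨⟨hp, hij, hq⟩, hnq⟩ := henc
          have hq' : (span b).2 = topJ c.σ := le_antisymm h2 hq
          have := (h3 hq').1
          apply hnq
          have : (span b).1 = topI c.σ := by omega
          exact Prod.ext this.symm hq'.symm
        · obtain ⟨hp, hij, hq⟩ := henc
          have hq' : (span b).2 = topJ c.σ := le_antisymm h2 hq
          have hodd : Odd c.z := Nat.not_even_iff_odd.mp hev
          have := (h3 hq').2 hodd
          omega
      · obtain ⟨h1, h2, -⟩ := ht b hbt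
        simp only [rightSet, Finset.mem_filter] at hbr
        obtain ⟨-, hge⟩ := hbr
        omega
  refine ⟨hdisj, ?_⟩
  intro b hb
  have hbG : b ∈ tG := by
    unfold reach at hb
    split_ifs at hb with hlen
    · exact hb
    · rcases Finset.mem_union.mp hb with h | h
      · simp only [leftSet, Finset.mem_filter] at h
        exact h.1
      · simp only [rightSet, Finset.mem_filter] at h
        exact h.1
  have hbt : b ∉ c.t := by
    intro hbt
    have : b ∈ reach tG c ∩ c.t := Finset.mem_inter.mpr ⟨hb, hbt⟩
    rw [hdisj] at this
    exact absurd this (Finset.notMem_empty b)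
  exact Finset.mem_sdiff.mpr ⟨hbG, hbt⟩


end SpanParser
end

section
/- For every valid configuration c = (z, σ, t) and every reachable tree t' ∈ D(c): the brackets already built persist, t ⊆ t', and every gold bracket of t' not already in t is reachable, i.e., t' ∩ t_G ⊆ t ∪ reach(c). -/
/-!
Formalization of the span-based Structure/Label transition parsing system of
Cross & Huang (2016), "Span-Based Constituency Parsing with a Structure-Label
System and Provably Optimal Dynamic Oracles".

A configuration is `(z, σ, t)` where `z` is the step number, `σ` the stack of
span boundaries and `t` the set of brackets built so far.  A bracket is a
triple `(X, i, j)` with `X` a nonterminal label and `i < j ≤ n` a span.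
-/

namespace SpanParser

variable {N : Type*}

variable [DecidableEq N]

/-! ### Auxiliary lemmas -/

lemma concat_of_ne_nil {l : List ℕ} (h : l ≠ []) : ∃ l' a, l = l' ++ [a] := by
  rcases l.eq_nil_or_concat with rfl | ⟨L, b, hL⟩
  · exact absurd rfl h
  · exact ⟨L, b, by simpa using hL⟩

lemma getLastD_mem {l : List ℕ} (h : l ≠ []) : l.getLastD 0 ∈ l := by
  obtain ⟨l', a, rfl⟩ := concat_of_ne_nil h
  simp [List.getLastD_concat]

lemma sorted_mem_le {l : List ℕ} (hs : l.Pairwise (· < ·)) {p : ℕ} (hp : p ∈ l) :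
    p ≤ l.getLastD 0 := by
  obtain ⟨l', a, rfl⟩ := concat_of_ne_nil (l := l) (fun h => by simp [h] at hp)
  rw [List.getLastD_concat]
  have hs' := List.pairwise_append.mp hs
  rcases List.mem_append.1 hp with h | h
  · exact (hs'.2.2 p h a (by simp)).le
  · simp only [List.mem_singleton] at h; omega

lemma sorted_mem_dropLast_lt {l : List ℕ} (hs : l.Pairwise (· < ·)) {p : ℕ}
    (hp : p ∈ l.dropLast) : p < l.getLastD 0 := by
  obtain ⟨l', a, rfl⟩ := concat_of_ne_nil (l := l) (fun h => by simp [h] at hp)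
  rw [List.dropLast_concat] at hp
  rw [List.getLastD_concat]
  exact (List.pairwise_append.mp hs).2.2 p hp a (by simp)

lemma dropLast_ne_nil_of_two_le {σ : List ℕ} (h : 2 ≤ σ.length) : σ.dropLast ≠ [] := by
  intro hc
  have := σ.length_dropLast
  rw [hc] at this
  simp at this
  omega

lemma topI_mem {σ : List ℕ} (h : 2 ≤ σ.length) : topI σ ∈ σ :=
  (List.dropLast_sublist σ).subset (getLastD_mem (dropLast_ne_nil_of_two_le h))

lemma topI_lt_topJ {σ : List ℕ} (hs : σ.Pairwise (· < ·)) (h : 2 ≤ σ.length) :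
    topI σ < topJ σ :=
  sorted_mem_dropLast_lt hs (getLastD_mem (dropLast_ne_nil_of_two_le h))

lemma le_topI_of_mem_lt {σ : List ℕ} (hs : σ.Pairwise (· < ·)) {p : ℕ}
    (hp : p ∈ σ) (hlt : p < topJ σ) : p ≤ topI σ := by
  obtain ⟨l', a, rfl⟩ := concat_of_ne_nil (l := σ) (fun h => by simp [h] at hp)
  rw [topJ, List.getLastD_concat] at hlt
  rw [topI, List.dropLast_concat]
  have hs' := List.pairwise_append.mp hs
  rcases List.mem_append.1 hp with h | h
  · exact sorted_mem_le hs'.1 h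
  · simp only [List.mem_singleton] at h; omega

lemma valid_inv {n : ℕ} {c : Config N} (hc : Valid n c) :
    c.σ ≠ [] ∧ c.σ.Pairwise (· < ·) := by
  have hc' : Relation.ReflTransGen (Step n) (initial N) c := hc
  clear hc
  induction hc' with
  | refl => exact ⟨by simp [initial], by simp [initial]⟩
  | @tail c₁ c₂ hsteps hstep ih =>
    obtain ⟨hne, hs⟩ := ih
    obtain ⟨a, happ, rfl⟩ := hstep
    cases a with
    | sh =>
      refine ⟨by simp [doAct], ?_⟩
      show (c₁.σ ++ [topJ c₁.σ + 1]).Pairwise (· < ·)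
      refine List.pairwise_append.mpr ⟨hs, List.pairwise_singleton _ _, ?_⟩
      intro x hx y hy
      simp only [List.mem_singleton] at hy
      subst hy
      have := sorted_mem_le hs hx
      exact lt_of_le_of_lt this (Nat.lt_succ_self _)
    | comb =>
      refine ⟨by simp [doAct], ?_⟩
      show (c₁.σ.dropLast.dropLast ++ [topJ c₁.σ]).Pairwise (· < ·)
      refine List.pairwise_append.mpr ⟨?_, List.pairwise_singleton _ _, ?_⟩
      · exact List.Pairwise.sublist ((c₁.σ.dropLast.dropLast_sublist).trans (c₁.σ.dropLast_sublist)) hs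
      · intro x hx y hy
        simp only [List.mem_singleton] at hy
        subst hy
        exact sorted_mem_dropLast_lt hs ((c₁.σ.dropLast.dropLast_sublist).subset hx)
    | label X => exact ⟨hne, hs⟩
    | nolabel => exact ⟨hne, hs⟩

lemma reach_subset_tG (tG : Finset (N × ℕ × ℕ)) (c : Config N) : reach tG c ⊆ tG := by
  classical
  simp only [reach]
  split
  · exact Finset.Subset.refl _
  · intro x hx
    rcases Finset.mem_union.1 hx with h | h
    · exact (Finset.mem_filter.1 h).1
    · exact (Finset.mem_filter.1 h).1

lemma t_subset_doAct (c : Config N) (a : Action N) : c.t ⊆ (doAct c a).t := by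
  cases a with
  | sh => exact Finset.Subset.refl _
  | comb => exact Finset.Subset.refl _
  | label X => exact Finset.subset_insert _ _
  | nolabel => exact Finset.Subset.refl _

lemma reach_succ_subset {tG : Finset (N × ℕ × ℕ)} {c : Config N}
    (hodd : Odd c.z) (hlen : 2 ≤ c.σ.length) (t'' : Finset (N × ℕ × ℕ)) :
    reach tG ⟨c.z + 1, c.σ, t''⟩ ⊆ reach tG c := by
  intro b hb
  have hnev : ¬ Even c.z := (Nat.not_even_iff_odd).mpr hodd
  simp only [reach] at hb ⊢
  rw [if_neg (by simp only [not_lt]; exact hlen)] at hb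
  rw [if_neg (by omega)]
  rcases Finset.mem_union.1 hb with hb | hb
  · simp only [leftSet, Finset.mem_filter] at hb
    obtain ⟨hbG, hcond, hmem⟩ := hb
    rw [if_pos (by simpa [Nat.even_add_one] using hnev)] at hcond
    refine Finset.mem_union_left _ ?_
    simp only [leftSet, Finset.mem_filter]
    exact ⟨hbG, by rw [if_neg hnev]; exact hcond.1, hmem⟩
  · exact Finset.mem_union_right _ hb

lemma step_key {n : ℕ} (tG : Finset (N × ℕ × ℕ)) {c : Config N}
    (hne : c.σ ≠ []) (hs : c.σ.Pairwise (· < ·)) {a : Action N} (happ : App n c a) :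
    (doAct c a).t ∩ tG ⊆ c.t ∪ reach tG c ∧
      reach tG (doAct c a) ⊆ c.t ∪ reach tG c := by
  cases a with
  | sh =>
    obtain ⟨hev, -, hj⟩ := happ
    refine ⟨fun x hx => Finset.mem_union_left _ (Finset.mem_inter.1 hx).1, ?_⟩
    intro b hb
    by_cases hlen : c.σ.length < 2
    · refine Finset.mem_union_right _ ?_
      simp only [reach]
      rw [if_pos hlen]
      exact reach_subset_tG tG _ hb
    · push_neg at hlen
      have hij : topI c.σ < topJ c.σ := topI_lt_topJ hs hlen
      have hσ' : (doAct c Action.sh).σ = c.σ ++ [topJ c.σ + 1] := rfl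
      have hlen' : ¬ (doAct c Action.sh).σ.length < 2 := by
        rw [hσ', List.length_append]
        simp only [List.length_singleton, not_lt]
        omega
      simp only [reach] at hb
      rw [if_neg hlen'] at hb
      have htJ' : topJ (doAct c Action.sh).σ = topJ c.σ + 1 := by
        rw [hσ', topJ, List.getLastD_concat]
      have htI' : topI (doAct c Action.sh).σ = topJ c.σ := by
        rw [hσ', topI, List.dropLast_concat]; rfl
      rcases Finset.mem_union.1 hb with hb | hb
      · simp only [leftSet, Finset.mem_filter] at hb
        obtain ⟨hbG, hcond, hmem⟩ := hb
        rw [if_neg (by simp only [doAct, Nat.even_add_one, not_not]; exact hev)] at hcond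
        rw [htI', htJ'] at hcond
        obtain ⟨hp, -, hq⟩ := hcond
        refine Finset.mem_union_right _ ?_
        simp only [reach]
        rw [if_neg (by omega)]
        by_cases hpj : topJ c.σ ≤ (span b).1
        · exact Finset.mem_union_right _ (Finset.mem_filter.2 ⟨hbG, hpj⟩)
        · push_neg at hpj
          have hmemσ : (span b).1 ∈ c.σ := by
            rw [hσ', List.mem_append] at hmem
            rcases hmem with h | h
            · exact h
            · simp only [List.mem_singleton] at h; omega
          have hpi : (span b).1 ≤ topI c.σ := le_topI_of_mem_lt hs hmemσ hpj
          refine Finset.mem_union_left _ ?_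
          simp only [leftSet, Finset.mem_filter]
          refine ⟨hbG, ?_, hmemσ⟩
          rw [if_pos hev]
          refine ⟨⟨hpi, hij, by omega⟩, fun h => ?_⟩
          have h2 := congrArg Prod.snd h
          simp only at h2
          omega
      · simp only [rightSet, Finset.mem_filter] at hb
        obtain ⟨hbG, hr⟩ := hb
        rw [htJ'] at hr
        refine Finset.mem_union_right _ ?_
        simp only [reach]
        rw [if_neg (by omega)]
        exact Finset.mem_union_right _ (Finset.mem_filter.2 ⟨hbG, by omega⟩)
  | comb =>
    obtain ⟨hev, hlen3⟩ := happ
    refine ⟨fun x hx => Finset.mem_union_left _ (Finset.mem_inter.1 hx).1, ?_⟩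
    intro b hb
    have hlen2 : 2 ≤ c.σ.length := by omega
    have hddsub : c.σ.dropLast.dropLast.Sublist c.σ :=
      (c.σ.dropLast.dropLast_sublist).trans (c.σ.dropLast_sublist)
    have hsdl : c.σ.dropLast.Pairwise (· < ·) := List.Pairwise.sublist (c.σ.dropLast_sublist) hs
    have hik : c.σ.dropLast.dropLast.getLastD 0 < topI c.σ :=
      topI_lt_topJ hsdl (by rw [List.length_dropLast]; omega)
    have hkj : topI c.σ < topJ c.σ := topI_lt_topJ hs hlen2
    have hσ' : (doAct c Action.comb).σ = c.σ.dropLast.dropLast ++ [topJ c.σ] := rfl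
    have hddlen : c.σ.dropLast.dropLast.length = c.σ.length - 2 := by
      rw [List.length_dropLast, List.length_dropLast]; omega
    have hlen' : ¬ (doAct c Action.comb).σ.length < 2 := by
      rw [hσ', List.length_append]
      simp only [List.length_singleton, not_lt]
      omega
    simp only [reach] at hb
    rw [if_neg hlen'] at hb
    have htJ' : topJ (doAct c Action.comb).σ = topJ c.σ := by
      rw [hσ', topJ, List.getLastD_concat]
    have htI' : topI (doAct c Action.comb).σ = c.σ.dropLast.dropLast.getLastD 0 := by
      rw [hσ', topI, List.dropLast_concat]
    rcases Finset.mem_union.1 hb with hb | hb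
    · simp only [leftSet, Finset.mem_filter] at hb
      obtain ⟨hbG, hcond, hmem⟩ := hb
      rw [if_neg (by simp only [doAct, Nat.even_add_one, not_not]; exact hev)] at hcond
      rw [htI', htJ'] at hcond
      obtain ⟨hp, hij', hq⟩ := hcond
      have hmemσ : (span b).1 ∈ c.σ := by
        rw [hσ', List.mem_append] at hmem
        rcases hmem with h | h
        · exact hddsub.subset h
        · simp only [List.mem_singleton] at h; omega
      refine Finset.mem_union_right _ ?_
      simp only [reach]
      rw [if_neg (by omega)]
      refine Finset.mem_union_left _ ?_
      simp only [leftSet, Finset.mem_filter]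
      refine ⟨hbG, ?_, hmemσ⟩
      rw [if_pos hev]
      refine ⟨⟨by omega, hkj, hq⟩, fun h => ?_⟩
      have h2 := congrArg Prod.fst h
      simp only at h2
      omega
    · simp only [rightSet, Finset.mem_filter] at hb
      obtain ⟨hbG, hr⟩ := hb
      rw [htJ'] at hr
      refine Finset.mem_union_right _ ?_
      simp only [reach]
      rw [if_neg (by omega)]
      exact Finset.mem_union_right _ (Finset.mem_filter.2 ⟨hbG, hr⟩)
  | label X =>
    obtain ⟨hodd, hlen2⟩ := happ
    have hnev : ¬ Even c.z := (Nat.not_even_iff_odd).mpr hodd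
    constructor
    · intro x hx
      obtain ⟨hx1, hx2⟩ := Finset.mem_inter.1 hx
      simp only [doAct, Finset.mem_insert] at hx1
      rcases hx1 with rfl | hx1
      · refine Finset.mem_union_right _ ?_
        simp only [reach]
        rw [if_neg (by omega)]
        refine Finset.mem_union_left _ ?_
        simp only [leftSet, Finset.mem_filter]
        refine ⟨hx2, ?_, topI_mem hlen2⟩
        rw [if_neg hnev]
        exact ⟨le_refl _, topI_lt_topJ hs hlen2, le_refl _⟩
      · exact Finset.mem_union_left _ hx1
    · exact fun b hb => Finset.mem_union_right _
        (reach_succ_subset (tG := tG) hodd hlen2 (insert (X, topI c.σ, topJ c.σ) c.t) hb)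
  | nolabel =>
    obtain ⟨hodd, hlen2, -⟩ := happ
    exact ⟨fun x hx => Finset.mem_union_left _ (Finset.mem_inter.1 hx).1,
      fun b hb => Finset.mem_union_right _
        (reach_succ_subset (tG := tG) hodd hlen2 c.t hb)⟩

/-- For every valid configuration `c = (z, σ, t)` and every reachable tree
`t' ∈ D(c)`: the built brackets persist, `t ⊆ t'`, and every gold bracket of
`t'` is either already built or reachable: `t' ∩ t_G ⊆ t ∪ reach(c)`. -/
theorem dset_brackets (n : ℕ) (hn : 1 ≤ n) (tG : Finset (N × ℕ × ℕ))
    (hG : IsGold n tG) (c : Config N) (hc : Valid n c)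
    (t' : Finset (N × ℕ × ℕ)) (ht' : t' ∈ Dset n c) :
    c.t ⊆ t' ∧ t' ∩ tG ⊆ c.t ∪ reach tG c := by
  obtain ⟨cf, hreach, -, rfl⟩ := ht'
  have hr : Relation.ReflTransGen (Step n) c cf := hreach
  clear hreach
  revert hc
  induction hr using Relation.ReflTransGen.head_induction_on with
  | refl =>
    intro _
    exact ⟨Finset.Subset.refl _,
      fun x hx => Finset.mem_union_left _ (Finset.mem_inter.1 hx).1⟩
  | head hstep hrest ih =>
    intro hc
    obtain ⟨a, happ, hEq⟩ := hstep
    subst hEq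
    have hv := valid_inv hc
    have hkey := step_key tG hv.1 hv.2 happ
    have hval' : Valid n (doAct _ a) := Relation.ReflTransGen.tail hc ⟨a, happ, rfl⟩
    obtain ⟨h1, h2⟩ := ih hval'
    refine ⟨(t_subset_doAct _ a).trans h1, fun x hx => ?_⟩
    rcases Finset.mem_union.1 (h2 hx) with h | h
    · exact hkey.1 (Finset.mem_inter.2 ⟨h, (Finset.mem_inter.1 hx).2⟩)
    · exact hkey.2 h

end SpanParser
end
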